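/- Let 0 < p₀ < p < p₁ ≤ ∞. For every f ∈ L^{p,∞}(X), writing f₀ = f·χ_{{|f| > f*(1)}} and f₁ = f - f₀, there is a constant C(p,p₀,p₁) such that ‖f₀‖_{L^{p₀,1}(X)} + ‖f₁‖_{L^{p₁,1}(X)} ≤ C(p,p₀,p₁) ‖f‖_{L^{p,∞}(X)}. In particular L^{p,r}(X) ⊆ L^{p₀,1}(X) + L^{p₁,1}(X) for every 0 < r ≤ ∞. -/

import Mathlib

open MeasureTheory Filter Set Topology ENNReal

noncomputable section
namespace Paper

variable {α ε : Type*} [MeasurableSpace α]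

/-- Decreasing rearrangement of `f` with respect to `μ`. -/
def rearr [NNNorm ε] (μ : Measure α) (f : α → ε) (t : ℝ≥0∞) : ℝ≥0∞ :=
  sInf {s : ℝ≥0∞ | μ {x | s < (‖f x‖₊ : ℝ≥0∞)} ≤ t}

/-- Lorentz quasinorm `‖f‖_{L^{p,q}(μ)}` (with the convention `L^{∞,q} = L^∞`). -/
def lorentzNorm [NNNorm ε] (μ : Measure α) (p q : ℝ≥0∞) (f : α → ε) : ℝ≥0∞ :=
  if p = ∞ then rearr μ f 0
  else if q = ∞ then ⨆ t : ℝ≥0∞, t ^ (1 / p).toReal * rearr μ f t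
  else (∫⁻ t in Ioi (0 : ℝ),
      (ENNReal.ofReal t ^ (1 / p).toReal * rearr μ f (ENNReal.ofReal t)) ^ q.toReal
        / ENNReal.ofReal t) ^ (1 / q.toReal)

/-! ### Auxiliary lemmas on the decreasing rearrangement -/

lemma rearr_le {μ : Measure α} {f : α → ℂ} {s t : ℝ≥0∞}
    (h : μ {x | s < (‖f x‖₊ : ℝ≥0∞)} ≤ t) : rearr μ f t ≤ s :=
  sInf_le h

lemma rearr_anti {μ : Measure α} {f : α → ℂ} : Antitone (rearr μ f) :=
  fun _ _ hst => sInf_le_sInf fun _ ha => le_trans ha hst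

lemma rearr_mono {μ : Measure α} {f g : α → ℂ}
    (h : ∀ x, (‖g x‖₊ : ℝ≥0∞) ≤ (‖f x‖₊ : ℝ≥0∞)) (t : ℝ≥0∞) :
    rearr μ g t ≤ rearr μ f t := by
  refine sInf_le_sInf fun s hs => ?_
  refine le_trans (measure_mono ?_) hs
  intro x hx
  exact lt_of_lt_of_le hx (h x)

lemma distrib_rearr_le (μ : Measure α) (f : α → ℂ) (t : ℝ≥0∞) :
    μ {x | rearr μ f t < (‖f x‖₊ : ℝ≥0∞)} ≤ t := by
  set s₀ := rearr μ f t with hs₀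
  rcases eq_or_ne s₀ ∞ with h | h
  · have : {x | s₀ < (‖f x‖₊ : ℝ≥0∞)} = ∅ := by
      ext x; simp [h]
    simp [this]
  · have hU : {x | s₀ < (‖f x‖₊ : ℝ≥0∞)}
        = ⋃ n : ℕ, {x | s₀ + ((n : ℝ≥0∞))⁻¹ < (‖f x‖₊ : ℝ≥0∞)} := by
      ext x
      simp only [mem_setOf_eq, mem_iUnion]
      constructor
      · intro hx
        obtain ⟨c, hc1, hc2⟩ := exists_between hx
        obtain ⟨n, hn⟩ := ENNReal.exists_inv_nat_lt (a := c - s₀) (by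
          simp only [ne_eq, tsub_eq_zero_iff_le, not_le]; exact hc1)
        refine ⟨n, ?_⟩
        calc s₀ + ((n : ℝ≥0∞))⁻¹ < s₀ + (c - s₀) := ENNReal.add_lt_add_left h hn
          _ = c := add_tsub_cancel_of_le hc1.le
          _ < _ := hc2
      · rintro ⟨n, hn⟩
        exact lt_of_le_of_lt (le_add_right le_rfl) hn
    rw [hU]
    have hmono : Monotone fun n : ℕ => {x | s₀ + ((n : ℝ≥0∞))⁻¹ < (‖f x‖₊ : ℝ≥0∞)} := by
      intro m n hmn x hx
      exact lt_of_le_of_lt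
        (add_le_add le_rfl (ENNReal.inv_le_inv.mpr ((Nat.cast_le (α := ℝ≥0∞)).mpr hmn))) hx
    rw [Directed.measure_iUnion (Monotone.directed_le hmono)]
    refine iSup_le fun n => ?_
    rcases eq_or_ne n 0 with rfl | hn
    · simp only [Nat.cast_zero, ENNReal.inv_zero]
      have : {x | s₀ + ∞ < (‖f x‖₊ : ℝ≥0∞)} = ∅ := by
        ext x; simp [add_top]
      simp [this]
    · obtain ⟨s, hs, hss⟩ := sInf_lt_iff.mp
        (show sInf {s : ℝ≥0∞ | μ {x | s < (‖f x‖₊ : ℝ≥0∞)} ≤ t} < s₀ + ((n : ℝ≥0∞))⁻¹ from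
          ENNReal.lt_add_right h (by simpa using hn))
      refine le_trans (measure_mono ?_) hs
      intro x hx
      exact lt_trans hss hx

/-! ### Integral computations -/

open intervalIntegral in
lemma lint_Ioo {b c : ℝ} (hb : -1 < b) (hc : 0 < c) :
    ∫⁻ s in Ioo (0 : ℝ) c, ENNReal.ofReal (s ^ b) = ENNReal.ofReal (c ^ (b + 1) / (b + 1)) := by
  have hint : IntegrableOn (fun s : ℝ => s ^ b) (Ioo 0 c) :=
    ((intervalIntegrable_rpow' hb (a := 0) (b := c)).1).mono_set Ioo_subset_Ioc_self
  rw [← ofReal_integral_eq_lintegral_ofReal hint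
    ((ae_restrict_iff' measurableSet_Ioo).mpr (ae_of_all _ fun x hx => Real.rpow_nonneg hx.1.le b))]
  congr 1
  rw [setIntegral_congr_set Ioo_ae_eq_Ioc, ← integral_of_le hc.le,
    integral_rpow (Or.inl hb), Real.zero_rpow (by linarith)]
  ring

lemma lint_Ioi {b c : ℝ} (hb : b < -1) (hc : 0 < c) :
    ∫⁻ s in Ioi c, ENNReal.ofReal (s ^ b) = ENNReal.ofReal (-c ^ (b + 1) / (b + 1)) := by
  rw [← ofReal_integral_eq_lintegral_ofReal (integrableOn_Ioi_rpow_of_lt hb hc)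
    ((ae_restrict_iff' measurableSet_Ioi).mpr
      (ae_of_all _ fun x hx => Real.rpow_nonneg (hc.le.trans (le_of_lt hx)) b))]
  rw [integral_Ioi_rpow_of_lt hb hc]

lemma rpow_aux {t a₀ a : ℝ} (ht : 0 < t) (M : ℝ≥0∞) :
    (ENNReal.ofReal t ^ a₀ * (M * ENNReal.ofReal (t ^ (-a)))) / ENNReal.ofReal t
      = M * ENNReal.ofReal (t ^ (a₀ - a - 1)) := by
  have h3 : t ^ (a₀ - a - 1) = t ^ a₀ * t ^ (-a) * t⁻¹ := by
    rw [← Real.rpow_neg_one t, ← Real.rpow_add ht, ← Real.rpow_add ht]; ring_nf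
  rw [ENNReal.ofReal_rpow_of_pos ht, div_eq_mul_inv, ← ENNReal.ofReal_inv_of_pos ht,
    h3, ENNReal.ofReal_mul (by positivity), ENNReal.ofReal_mul (by positivity)]
  ring

/-! ### The two basic estimates -/

lemma est0 {μ : Measure α} {g : α → ℂ} {M : ℝ≥0∞} {a a₀ : ℝ} (ha : 0 < a) (haa : a < a₀)
    (h1 : ∀ t : ℝ, 0 < t → t < 1 →
      rearr μ g (ENNReal.ofReal t) ≤ M * ENNReal.ofReal (t ^ (-a)))
    (h2 : ∀ t : ℝ, 1 ≤ t → rearr μ g (ENNReal.ofReal t) = 0) :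
    (∫⁻ t in Ioi (0 : ℝ),
        (ENNReal.ofReal t ^ a₀ * rearr μ g (ENNReal.ofReal t)) / ENNReal.ofReal t)
      ≤ M * ENNReal.ofReal (1 / (a₀ - a)) := by
  calc ∫⁻ t in Ioi (0 : ℝ),
        (ENNReal.ofReal t ^ a₀ * rearr μ g (ENNReal.ofReal t)) / ENNReal.ofReal t
      ≤ ∫⁻ t in Ioi (0 : ℝ),
          (Ioo (0:ℝ) 1).indicator (fun t => M * ENNReal.ofReal (t ^ (a₀ - a - 1))) t := by
        refine lintegral_mono_ae ((ae_restrict_iff' measurableSet_Ioi).mpr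
          (ae_of_all _ fun t ht => ?_))
        rcases lt_or_ge t 1 with htt | htt
        · rw [Set.indicator_of_mem (mem_Ioo.mpr ⟨ht, htt⟩)]
          calc (ENNReal.ofReal t ^ a₀ * rearr μ g (ENNReal.ofReal t)) / ENNReal.ofReal t
              ≤ (ENNReal.ofReal t ^ a₀ * (M * ENNReal.ofReal (t ^ (-a)))) / ENNReal.ofReal t := by
                gcongr
                exact h1 t ht htt
            _ = M * ENNReal.ofReal (t ^ (a₀ - a - 1)) := rpow_aux ht M
        · rw [h2 t htt, mul_zero, ENNReal.zero_div]
          exact zero_le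
    _ = ∫⁻ t in Ioo (0:ℝ) 1, M * ENNReal.ofReal (t ^ (a₀ - a - 1)) := by
        rw [lintegral_indicator measurableSet_Ioo, Measure.restrict_restrict measurableSet_Ioo,
          inter_eq_left.mpr (fun x hx => hx.1)]
    _ = M * ∫⁻ t in Ioo (0:ℝ) 1, ENNReal.ofReal (t ^ (a₀ - a - 1)) := by
        rw [lintegral_const_mul]; fun_prop
    _ = M * ENNReal.ofReal (1 / (a₀ - a)) := by
        rw [lint_Ioo (by linarith) one_pos]
        norm_num [Real.one_rpow]

lemma est1 {μ : Measure α} {g : α → ℂ} {M N : ℝ≥0∞} {a a₁ : ℝ} (ha1 : 0 < a₁) (haa : a₁ < a)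
    (h1 : ∀ t : ℝ, 0 < t → t < 1 → rearr μ g (ENNReal.ofReal t) ≤ N)
    (h2 : ∀ t : ℝ, 1 ≤ t →
      rearr μ g (ENNReal.ofReal t) ≤ M * ENNReal.ofReal (t ^ (-a))) :
    (∫⁻ t in Ioi (0 : ℝ),
        (ENNReal.ofReal t ^ a₁ * rearr μ g (ENNReal.ofReal t)) / ENNReal.ofReal t)
      ≤ N * ENNReal.ofReal (1 / a₁) + M * ENNReal.ofReal (-1 / (a₁ - a)) := by
  calc ∫⁻ t in Ioi (0 : ℝ),
        (ENNReal.ofReal t ^ a₁ * rearr μ g (ENNReal.ofReal t)) / ENNReal.ofReal t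
      ≤ ∫⁻ t in Ioi (0 : ℝ),
          ((Ioo (0:ℝ) 1).indicator (fun t => N * ENNReal.ofReal (t ^ (a₁ - 1))) t
            + (Ici (1:ℝ)).indicator (fun t => M * ENNReal.ofReal (t ^ (a₁ - a - 1))) t) := by
        refine lintegral_mono_ae ((ae_restrict_iff' measurableSet_Ioi).mpr
          (ae_of_all _ fun t ht => ?_))
        rcases lt_or_ge t 1 with htt | htt
        · rw [Set.indicator_of_mem (mem_Ioo.mpr ⟨ht, htt⟩),
            Set.indicator_of_notMem (by simp [htt.not_ge] : t ∉ Ici (1:ℝ)), add_zero]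
          calc (ENNReal.ofReal t ^ a₁ * rearr μ g (ENNReal.ofReal t)) / ENNReal.ofReal t
              ≤ (ENNReal.ofReal t ^ a₁ * (N * ENNReal.ofReal (t ^ (-(0:ℝ)))))
                  / ENNReal.ofReal t := by
                gcongr
                simpa [Real.rpow_zero] using h1 t ht htt
            _ = N * ENNReal.ofReal (t ^ (a₁ - 0 - 1)) := rpow_aux ht N
            _ = N * ENNReal.ofReal (t ^ (a₁ - 1)) := by norm_num
        · rw [Set.indicator_of_notMem (by simp [htt, not_lt.mpr htt] : t ∉ Ioo (0:ℝ) 1),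
            Set.indicator_of_mem (mem_Ici.mpr htt), zero_add]
          calc (ENNReal.ofReal t ^ a₁ * rearr μ g (ENNReal.ofReal t)) / ENNReal.ofReal t
              ≤ (ENNReal.ofReal t ^ a₁ * (M * ENNReal.ofReal (t ^ (-a))))
                  / ENNReal.ofReal t := by
                gcongr
                exact h2 t htt
            _ = M * ENNReal.ofReal (t ^ (a₁ - a - 1)) := rpow_aux (lt_of_lt_of_le one_pos htt) M
    _ = (∫⁻ t in Ioi (0 : ℝ),
          (Ioo (0:ℝ) 1).indicator (fun t => N * ENNReal.ofReal (t ^ (a₁ - 1))) t)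
        + ∫⁻ t in Ioi (0 : ℝ),
          (Ici (1:ℝ)).indicator (fun t => M * ENNReal.ofReal (t ^ (a₁ - a - 1))) t := by
        rw [lintegral_add_left]
        exact (Measurable.indicator (by fun_prop) measurableSet_Ioo)
    _ ≤ N * ENNReal.ofReal (1 / a₁) + M * ENNReal.ofReal (-1 / (a₁ - a)) := by
        gcongr
        · rw [lintegral_indicator measurableSet_Ioo, Measure.restrict_restrict measurableSet_Ioo,
            inter_eq_left.mpr (fun x hx => hx.1), lintegral_const_mul _ (by fun_prop),
            lint_Ioo (by linarith) one_pos]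
          norm_num [Real.one_rpow]
        · rw [lintegral_indicator measurableSet_Ici, Measure.restrict_restrict measurableSet_Ici,
            show Ici (1:ℝ) ∩ Ioi 0 = Ici 1 from
              inter_eq_left.mpr (fun x hx => mem_Ioi.mpr (lt_of_lt_of_le one_pos (mem_Ici.mp hx))),
            Measure.restrict_congr_set Ioi_ae_eq_Ici.symm,
            lintegral_const_mul _ (by fun_prop), lint_Ioi (by linarith) one_pos]
          norm_num [Real.one_rpow]

/-! ### Unfolding lemmas -/

lemma lorentz_one {μ : Measure α} (g : α → ℂ) {p' : ℝ≥0∞} (hp : p' ≠ ∞) :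
    lorentzNorm μ p' 1 g = ∫⁻ t in Ioi (0:ℝ),
      (ENNReal.ofReal t ^ (1/p').toReal * rearr μ g (ENNReal.ofReal t)) / ENNReal.ofReal t := by
  rw [lorentzNorm, if_neg hp, if_neg one_ne_top]
  norm_num

lemma le_lorentz_top {μ : Measure α} (f : α → ℂ) {p : ℝ≥0∞} (hp : p ≠ ∞) (t : ℝ≥0∞) :
    t ^ (1/p).toReal * rearr μ f t ≤ lorentzNorm μ p ∞ f := by
  rw [lorentzNorm, if_neg hp, if_pos rfl]
  exact le_iSup (fun t => t ^ (1/p).toReal * rearr μ f t) t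

/-! ### Embedding `L^{p,r} ⊆ L^{p,∞}` -/

lemma lorentz_top_le {μ : Measure α} (f : α → ℂ) {p r : ℝ≥0∞} (hp0 : p ≠ 0) (hp : p ≠ ∞)
    (hr0 : r ≠ 0) (hr : r ≠ ∞) :
    lorentzNorm μ p ∞ f ≤ lorentzNorm μ p r f *
      ENNReal.ofReal (((1/p).toReal * r.toReal) ^ (1 / r.toReal)) := by
  set a := (1/p).toReal with ha_def
  set r' := r.toReal with hr'_def
  have ha : 0 < a := ENNReal.toReal_pos (by simp [hp]) (by simp [hp0])
  have hr' : 0 < r' := ENNReal.toReal_pos hr0 hr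
  have har : 0 < a * r' := mul_pos ha hr'
  set I := ∫⁻ t in Ioi (0:ℝ),
      (ENNReal.ofReal t ^ a * rearr μ f (ENNReal.ofReal t)) ^ r' / ENNReal.ofReal t with hI
  have hL : lorentzNorm μ p r f = I ^ (1/r') := by rw [lorentzNorm, if_neg hp, if_neg hr]
  rw [lorentzNorm, if_neg hp, if_pos rfl, hL]
  refine iSup_le fun t => ?_
  rcases eq_or_ne t 0 with rfl | ht0
  · rw [ENNReal.zero_rpow_of_pos ha, zero_mul]
    exact zero_le
  rcases eq_or_ne t ∞ with rfl | htt
  · have h0 : rearr μ f ∞ = 0 :=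
      le_antisymm (sInf_le (le_top : _ ≤ (∞ : ℝ≥0∞))) zero_le
    simp [h0]
  have hT : 0 < t.toReal := ENNReal.toReal_pos ht0 htt
  have step1 : (rearr μ f t) ^ r' * ENNReal.ofReal (t.toReal ^ (a*r') / (a*r')) ≤ I := by
    calc (rearr μ f t) ^ r' * ENNReal.ofReal (t.toReal ^ (a*r') / (a*r'))
        = (rearr μ f t) ^ r' * ∫⁻ s in Ioo (0:ℝ) t.toReal, ENNReal.ofReal (s ^ (a*r' - 1)) := by
          rw [lint_Ioo (by linarith) hT]
          norm_num
      _ = ∫⁻ s in Ioo (0:ℝ) t.toReal,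
            (rearr μ f t) ^ r' * ENNReal.ofReal (s ^ (a*r' - 1)) := by
          rw [lintegral_const_mul]; fun_prop
      _ ≤ ∫⁻ s in Ioo (0:ℝ) t.toReal,
            (ENNReal.ofReal s ^ a * rearr μ f (ENNReal.ofReal s)) ^ r' / ENNReal.ofReal s := by
          refine lintegral_mono_ae ((ae_restrict_iff' measurableSet_Ioo).mpr
            (ae_of_all _ fun s hs => ?_))
          have hs0 : 0 < s := hs.1
          have hle : rearr μ f t ≤ rearr μ f (ENNReal.ofReal s) := by
            refine rearr_anti ?_
            rw [← ENNReal.ofReal_toReal htt]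
            exact ENNReal.ofReal_le_ofReal hs.2.le
          calc (rearr μ f t) ^ r' * ENNReal.ofReal (s ^ (a*r' - 1))
              = (ENNReal.ofReal s ^ a * rearr μ f t) ^ r' / ENNReal.ofReal s := by
                rw [ENNReal.mul_rpow_of_nonneg _ _ hr'.le, ← ENNReal.rpow_mul,
                  ENNReal.ofReal_rpow_of_pos hs0, div_eq_mul_inv,
                  ← ENNReal.ofReal_inv_of_pos hs0,
                  show s ^ (a*r'-1) = s ^ (a*r') * s⁻¹ by
                    rw [← Real.rpow_neg_one s, ← Real.rpow_add hs0]; ring_nf,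
                  ENNReal.ofReal_mul (by positivity)]
                ring
            _ ≤ (ENNReal.ofReal s ^ a * rearr μ f (ENNReal.ofReal s)) ^ r'
                  / ENNReal.ofReal s := by
                gcongr
      _ ≤ I := lintegral_mono' (Measure.restrict_mono (fun s hs => hs.1) le_rfl) le_rfl
  have step2 : (t ^ a * rearr μ f t) ^ r' ≤ I * ENNReal.ofReal (a * r') := by
    have ht_eq : t ^ a = ENNReal.ofReal (t.toReal ^ a) := by
      rw [← ENNReal.ofReal_rpow_of_pos hT, ENNReal.ofReal_toReal htt]
    calc (t ^ a * rearr μ f t) ^ r'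
        = ENNReal.ofReal (t.toReal ^ (a * r')) * (rearr μ f t) ^ r' := by
          rw [ENNReal.mul_rpow_of_nonneg _ _ hr'.le, ht_eq,
            ENNReal.ofReal_rpow_of_pos (Real.rpow_pos_of_pos hT a),
            ← Real.rpow_mul hT.le]
      _ = ((rearr μ f t) ^ r' * ENNReal.ofReal (t.toReal ^ (a*r') / (a*r')))
            * ENNReal.ofReal (a * r') := by
          rw [mul_assoc, ← ENNReal.ofReal_mul (by positivity), div_mul_cancel₀ _ har.ne']
          ring
      _ ≤ I * ENNReal.ofReal (a * r') := by gcongr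
  calc t ^ a * rearr μ f t
      = ((t ^ a * rearr μ f t) ^ r') ^ (1/r') := by
        rw [← ENNReal.rpow_mul, mul_one_div_cancel hr'.ne', ENNReal.rpow_one]
    _ ≤ (I * ENNReal.ofReal (a * r')) ^ (1/r') :=
        ENNReal.rpow_le_rpow step2 (by positivity)
    _ = I ^ (1/r') * ENNReal.ofReal ((a * r') ^ (1/r')) := by
        rw [ENNReal.mul_rpow_of_nonneg _ _ (by positivity : (0:ℝ) ≤ 1/r'),
          ENNReal.ofReal_rpow_of_pos har]

/-- The decomposition `f = f₀ + f₁` with `f₀ = f χ_{{|f| > f*(1)}}` satisfies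
`‖f₀‖_{L^{p₀,1}} + ‖f₁‖_{L^{p₁,1}} ≤ C(p,p₀,p₁) ‖f‖_{L^{p,∞}}`; in particular
`L^{p,r} ⊆ L^{p₀,1} + L^{p₁,1}`. -/
theorem stmt9 (p₀ p p₁ : ℝ≥0∞) (h0 : 0 < p₀) (h01 : p₀ < p) (h1 : p < p₁) :
    ∃ C : ℝ≥0∞, 0 < C ∧ C < ∞ ∧
      ∀ (X : Type) (_ : MeasurableSpace X) (μ : Measure X), SigmaFinite μ →
        ∀ f : X → ℂ, Measurable f →
          (lorentzNorm μ p₀ 1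
              (({x | rearr μ f 1 < (‖f x‖₊ : ℝ≥0∞)} : Set X).indicator f)
            + lorentzNorm μ p₁ 1
              (fun x => f x -
                (({x | rearr μ f 1 < (‖f x‖₊ : ℝ≥0∞)} : Set X).indicator f) x)
            ≤ C * lorentzNorm μ p ∞ f) ∧
          (∀ r : ℝ≥0∞, 0 < r → lorentzNorm μ p r f < ∞ →
            ∃ g h : X → ℂ, f = g + h ∧
              lorentzNorm μ p₀ 1 g < ∞ ∧ lorentzNorm μ p₁ 1 h < ∞) := by
  have hp_top : p ≠ ∞ := h1.ne_top
  have hp0_top : p₀ ≠ ∞ := h01.ne_top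
  have hp_pos : 0 < p.toReal := ENNReal.toReal_pos (h0.trans h01).ne' hp_top
  have hp0_pos : 0 < p₀.toReal := ENNReal.toReal_pos h0.ne' hp0_top
  set a := (1/p).toReal with ha_def
  set a₀ := (1/p₀).toReal with ha0_def
  set a₁ := (1/p₁).toReal with ha1_def
  have haR : a = 1 / p.toReal := by rw [ha_def, ENNReal.toReal_div, ENNReal.toReal_one]
  have ha0R : a₀ = 1 / p₀.toReal := by rw [ha0_def, ENNReal.toReal_div, ENNReal.toReal_one]
  have ha : 0 < a := by rw [haR]; positivity
  have haa0 : a < a₀ := by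
    rw [haR, ha0R]
    exact one_div_lt_one_div_of_lt hp0_pos
      ((ENNReal.toReal_lt_toReal hp0_top hp_top).mpr h01)
  set C : ℝ≥0∞ := ENNReal.ofReal (1/(a₀ - a))
    + ((ENNReal.ofReal (1/a₁) + ENNReal.ofReal (-1/(a₁ - a))) + 1) with hC_def
  have hC1 : (1:ℝ≥0∞) ≤ C := le_trans le_add_self le_add_self
  have hCtop : C < ∞ := by
    rw [hC_def]
    refine ENNReal.add_lt_top.mpr ⟨ENNReal.ofReal_lt_top, ?_⟩
    exact ENNReal.add_lt_top.mpr
      ⟨ENNReal.add_lt_top.mpr ⟨ENNReal.ofReal_lt_top, ENNReal.ofReal_lt_top⟩, one_lt_top⟩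
  refine ⟨C, lt_of_lt_of_le zero_lt_one hC1, hCtop, ?_⟩
  intro X mX μ _sf f hf
  set A := {x | rearr μ f 1 < (‖f x‖₊ : ℝ≥0∞)} with hA_def
  set f0 := A.indicator f with hf0_def
  set M := lorentzNorm μ p ∞ f with hM_def
  have hM : ∀ t, t ^ a * rearr μ f t ≤ M := le_lorentz_top f hp_top
  have hM1 : rearr μ f 1 ≤ M := by simpa [ENNReal.one_rpow] using hM 1
  have hMt : ∀ t : ℝ, 0 < t →
      rearr μ f (ENNReal.ofReal t) ≤ M * ENNReal.ofReal (t ^ (-a)) := by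
    intro t ht
    calc rearr μ f (ENNReal.ofReal t)
        = (ENNReal.ofReal (t^(-a)) * ENNReal.ofReal t ^ a) * rearr μ f (ENNReal.ofReal t) := by
          rw [ENNReal.ofReal_rpow_of_pos ht, ← ENNReal.ofReal_mul (by positivity),
            show t^(-a) * t^a = 1 by
              rw [← Real.rpow_add ht]; norm_num,
            ENNReal.ofReal_one, one_mul]
      _ = ENNReal.ofReal (t^(-a)) * (ENNReal.ofReal t ^ a * rearr μ f (ENNReal.ofReal t)) := by
          ring
      _ ≤ ENNReal.ofReal (t^(-a)) * M := by
          gcongr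
          exact hM _
      _ = M * ENNReal.ofReal (t^(-a)) := mul_comm _ _
  -- properties of f₀
  have hf0_le : ∀ x, (‖f0 x‖₊ : ℝ≥0∞) ≤ (‖f x‖₊ : ℝ≥0∞) := by
    intro x
    by_cases hx : x ∈ A
    · simp [hf0_def, Set.indicator_of_mem hx]
    · simp [hf0_def, Set.indicator_of_notMem hx]
  have hmuA : μ A ≤ 1 := distrib_rearr_le μ f 1
  have hf0_zero : ∀ t : ℝ, 1 ≤ t → rearr μ f0 (ENNReal.ofReal t) = 0 := by
    intro t ht
    refine le_antisymm (rearr_le ?_) zero_le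
    refine le_trans (le_trans (measure_mono ?_) hmuA) (ENNReal.one_le_ofReal.mpr ht)
    intro x hx
    by_contra hxA
    rw [mem_setOf_eq, hf0_def, Set.indicator_of_notMem hxA] at hx
    simp at hx
  have hf0_b : ∀ t : ℝ, 0 < t → t < 1 →
      rearr μ f0 (ENNReal.ofReal t) ≤ M * ENNReal.ofReal (t ^ (-a)) :=
    fun t ht _ => (rearr_mono hf0_le _).trans (hMt t ht)
  -- properties of f₁
  have hf1_le : ∀ x, (‖f x - f0 x‖₊ : ℝ≥0∞) ≤ (‖f x‖₊ : ℝ≥0∞) := by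
    intro x
    by_cases hx : x ∈ A
    · simp [hf0_def, Set.indicator_of_mem hx]
    · simp [hf0_def, Set.indicator_of_notMem hx]
  have hf1_le' : ∀ x, (‖f x - f0 x‖₊ : ℝ≥0∞) ≤ rearr μ f 1 := by
    intro x
    by_cases hx : x ∈ A
    · simp [hf0_def, Set.indicator_of_mem hx]
    · rw [hf0_def, Set.indicator_of_notMem hx, sub_zero]
      exact not_lt.mp hx
  have hf1_r1 : ∀ t, rearr μ (fun x => f x - f0 x) t ≤ rearr μ f 1 := by
    intro t
    refine rearr_le ?_
    have hempty : {x | rearr μ f 1 < (‖f x - f0 x‖₊ : ℝ≥0∞)} = ∅ := by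
      ext x
      simp only [mem_setOf_eq, mem_empty_iff_false, iff_false, not_lt]
      exact hf1_le' x
    simp [hempty]
  have hf1_b1 : ∀ t : ℝ, 0 < t → t < 1 →
      rearr μ (fun x => f x - f0 x) (ENNReal.ofReal t) ≤ M :=
    fun t _ _ => (hf1_r1 _).trans hM1
  have hf1_b2 : ∀ t : ℝ, 1 ≤ t →
      rearr μ (fun x => f x - f0 x) (ENNReal.ofReal t) ≤ M * ENNReal.ofReal (t ^ (-a)) :=
    fun t ht => (rearr_mono hf1_le _).trans (hMt t (lt_of_lt_of_le one_pos ht))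
  -- the two norm bounds
  have hbound0 : lorentzNorm μ p₀ 1 f0 ≤ M * ENNReal.ofReal (1/(a₀ - a)) := by
    rw [lorentz_one f0 hp0_top]
    exact est0 ha haa0 hf0_b hf0_zero
  have hbound1 : lorentzNorm μ p₁ 1 (fun x => f x - f0 x)
      ≤ M * ((ENNReal.ofReal (1/a₁) + ENNReal.ofReal (-1/(a₁ - a))) + 1) := by
    by_cases hp1 : p₁ = ∞
    · have : lorentzNorm μ p₁ 1 (fun x => f x - f0 x)
          = rearr μ (fun x => f x - f0 x) 0 := by
        rw [hp1, lorentzNorm, if_pos rfl]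
      rw [this]
      calc rearr μ (fun x => f x - f0 x) 0 ≤ M := (hf1_r1 0).trans hM1
        _ = M * 1 := (mul_one M).symm
        _ ≤ _ := by gcongr; exact le_add_self
    · have hp1_pos : 0 < p₁.toReal :=
        ENNReal.toReal_pos (h0.trans (h01.trans h1)).ne' hp1
      have ha1R : a₁ = 1 / p₁.toReal := by
        rw [ha1_def, ENNReal.toReal_div, ENNReal.toReal_one]
      have ha1 : 0 < a₁ := by rw [ha1R]; positivity
      have ha1a : a₁ < a := by
        rw [haR, ha1R]
        exact one_div_lt_one_div_of_lt hp_pos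
          ((ENNReal.toReal_lt_toReal hp_top hp1).mpr h1)
      calc lorentzNorm μ p₁ 1 (fun x => f x - f0 x)
          ≤ M * ENNReal.ofReal (1/a₁) + M * ENNReal.ofReal (-1/(a₁ - a)) := by
            rw [lorentz_one _ hp1]
            exact est1 ha1 ha1a hf1_b1 hf1_b2
        _ = M * (ENNReal.ofReal (1/a₁) + ENNReal.ofReal (-1/(a₁ - a))) := (mul_add _ _ _).symm
        _ ≤ _ := mul_le_mul_right le_self_add M
  have hmain : lorentzNorm μ p₀ 1 f0 + lorentzNorm μ p₁ 1 (fun x => f x - f0 x) ≤ C * M := by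
    calc lorentzNorm μ p₀ 1 f0 + lorentzNorm μ p₁ 1 (fun x => f x - f0 x)
        ≤ M * ENNReal.ofReal (1/(a₀ - a))
          + M * ((ENNReal.ofReal (1/a₁) + ENNReal.ofReal (-1/(a₁ - a))) + 1) :=
          add_le_add hbound0 hbound1
      _ = M * C := by rw [hC_def]; ring
      _ = C * M := mul_comm _ _
  refine ⟨hmain, ?_⟩
  intro r hr0 hrfin
  have hMfin : M < ∞ := by
    rcases eq_or_ne r ∞ with rfl | hrtop
    · exact hrfin
    · refine lt_of_le_of_lt
        (lorentz_top_le f (h0.trans h01).ne' hp_top hr0.ne' hrtop) ?_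
      exact ENNReal.mul_lt_top hrfin ENNReal.ofReal_lt_top
  have hCM : C * M < ∞ := ENNReal.mul_lt_top hCtop hMfin
  refine ⟨f0, fun x => f x - f0 x, ?_, ?_, ?_⟩
  · funext x; simp
  · exact lt_of_le_of_lt (le_trans le_self_add hmain) hCM
  · exact lt_of_le_of_lt (le_trans le_add_self hmain) hCM

end Paper
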